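/- Let F be a finite field with q elements, and let K ≥ 3, 0 ≤ T, T+1 < U ≤ K−1 and L, L_X, L_Y be natural numbers. For every two-round DSA scheme with input length L and second-round message length L_Y that satisfies both the correctness constraint and the security constraint with collusion parameter T, one has (U−T−1)·L_Y ≥ L. Consequently the second-round rate satisfies R₂ = L_Y/L ≥ 1/(U−T−1) whenever L ≥ 1. -/

import Mathlib

open MeasureTheory Finset
open scoped ENNReal

/-- Two (discrete) random tuples `f` and `g` are statistically independent:
the joint law of `(f, g)` is the product of the marginal laws, expressed pointwise. -/
def IndepRV {Ω A B : Type*} [MeasurableSpace Ω] (P : Measure Ω)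
    (f : Ω → A) (g : Ω → B) : Prop :=
  ∀ (a : A) (b : B), P (f ⁻¹' {a} ∩ g ⁻¹' {b}) = P (f ⁻¹' {a}) * P (g ⁻¹' {b})

/-- A finite family of (discrete) random variables is mutually independent:
the joint law factorizes as the product of the marginals, expressed pointwise. -/
def iIndepRV {Ω ι : Type*} [Fintype ι] {A : ι → Type*} [MeasurableSpace Ω]
    (P : Measure Ω) (f : ∀ i, Ω → A i) : Prop :=
  ∀ a : ∀ i, A i, P (⋂ i, f i ⁻¹' {a i}) = ∏ i, P (f i ⁻¹' {a i})

/-- Conditional independence of two (discrete) random tuples `f` and `g` given the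
σ-algebra generated by a third (discrete) random tuple `h`, expressed pointwise:
`P(f = a, g = b | h = c) = P(f = a | h = c) * P(g = b | h = c)` for every `a`, `b`, `c`,
in a multiplied-out form that avoids division by zero. -/
def CondIndepRV {Ω A B C : Type*} [MeasurableSpace Ω] (P : Measure Ω)
    (f : Ω → A) (g : Ω → B) (h : Ω → C) : Prop :=
  ∀ (a : A) (b : B) (c : C),
    P (f ⁻¹' {a} ∩ g ⁻¹' {b} ∩ h ⁻¹' {c}) * P (h ⁻¹' {c}) =
      P (f ⁻¹' {a} ∩ h ⁻¹' {c}) * P (g ⁻¹' {b} ∩ h ⁻¹' {c})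

/-- A random variable valued in a finite type is uniformly distributed. -/
def UniformRV {Ω A : Type*} [Fintype A] [MeasurableSpace Ω] (P : Measure Ω)
    (f : Ω → A) : Prop :=
  ∀ a : A, P (f ⁻¹' {a}) = (Fintype.card A : ℝ≥0∞)⁻¹

/-- A two-round decentralized secure aggregation (DSA) scheme with `K` users,
minimum number `U` of surviving users, input length `L`, first-round message length
`LX`, and second-round message length `LY`, over the finite field `F`. -/
structure DSAScheme (F : Type) [Fintype F] (K U L LX LY : ℕ) where
  /-- The underlying probability space. -/
  Ω : Type
  /-- The σ-algebra on `Ω`. -/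
  [mΩ : MeasurableSpace Ω]
  /-- The probability measure. -/
  P : Measure Ω
  /-- `P` is a probability measure. -/
  [probP : IsProbabilityMeasure P]
  /-- The (finite) alphabet of the key random variables. -/
  Zt : Type
  /-- The key alphabet is finite. -/
  [fZt : Fintype Zt]
  /-- The input random variables `W₁, …, W_K`, valued in `F^L`. -/
  W : Fin K → Ω → (Fin L → F)
  /-- The key random variables `Z₁, …, Z_K`. -/
  Z : Fin K → Ω → Zt
  /-- The first-round (deterministic) encoders: `X_k = f_k (W_k, Z_k) ∈ F^{LX}`. -/
  f : Fin K → (Fin L → F) → Zt → (Fin LX → F)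
  /-- The second-round (deterministic) encoders, one for each surviving set `𝒰₁`:
  `Y_k^{𝒰₁} = g_{k,𝒰₁} (W_k, Z_k) ∈ F^{LY}`. -/
  g : Fin K → Finset (Fin K) → (Fin L → F) → Zt → (Fin LY → F)
  /-- Each `W_k` is a (measurable) random variable. -/
  measW : ∀ k (a : Fin L → F), MeasurableSet (W k ⁻¹' {a})
  /-- Each `Z_k` is a (measurable) random variable. -/
  measZ : ∀ k (z : Zt), MeasurableSet (Z k ⁻¹' {z})
  /-- The inputs `W₁, …, W_K` are mutually independent. -/
  indepW : iIndepRV P W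
  /-- Each input is uniformly distributed on `F^L`. -/
  unifW : ∀ k, UniformRV P (W k)
  /-- The tuple of inputs `(W₁, …, W_K)` is independent of the joint key tuple
  `(Z₁, …, Z_K)`. -/
  indepWZ : IndepRV P (fun ω (k : Fin K) => W k ω) (fun ω (k : Fin K) => Z k ω)

namespace DSAScheme

variable {F : Type} [Fintype F] [AddCommMonoid F] {K U L LX LY : ℕ}

/-- The first-round message of user `k`. -/
def X (𝓢 : DSAScheme F K U L LX LY) (k : Fin K) (ω : 𝓢.Ω) : Fin LX → F :=
  𝓢.f k (𝓢.W k ω) (𝓢.Z k ω)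

/-- The second-round message of user `k` when the first-round surviving set is `U1`. -/
def Y (𝓢 : DSAScheme F K U L LX LY) (U1 : Finset (Fin K)) (k : Fin K) (ω : 𝓢.Ω) :
    Fin LY → F :=
  𝓢.g k U1 (𝓢.W k ω) (𝓢.Z k ω)

/-- Correctness: for all surviving sets `𝒰₂ ⊆ 𝒰₁` with `|𝒰₂| ≥ U` and every user
`u ∈ 𝒰₂`, there is a deterministic decoder recovering `∑_{k ∈ 𝒰₁} W_k` almost surely
from `(X_k)_{k ∈ 𝒰₁ \ {u}}`, `(Y_k^{𝒰₁})_{k ∈ 𝒰₂ \ {u}}`, `W_u` and `Z_u`. -/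
def Correct (𝓢 : DSAScheme F K U L LX LY) : Prop :=
  ∀ U1 U2 : Finset (Fin K), U2 ⊆ U1 → U ≤ U2.card → ∀ u ∈ U2,
    ∃ d : ({k // k ∈ U1.erase u} → (Fin LX → F)) →
          ({k // k ∈ U2.erase u} → (Fin LY → F)) →
          (Fin L → F) → 𝓢.Zt → (Fin L → F),
      ∀ᵐ ω ∂𝓢.P,
        d (fun k => 𝓢.X k.1 ω) (fun k => 𝓢.Y U1 k.1 ω) (𝓢.W u ω) (𝓢.Z u ω)
          = ∑ k ∈ U1, 𝓢.W k ω

/-- Security against `T` colluding users: for every surviving set `𝒰₁` with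
`|𝒰₁| ≥ U`, every colluding set `𝒯` with `|𝒯| ≤ T` and every user `u`, the tuple
`((X_k)_{k ≠ u}, (Y_k^{𝒰₁})_{k ∈ 𝒰₁ \ {u}})` is conditionally independent of
`(W₁, …, W_K)` given `(∑_{k ∈ 𝒰₁} W_k, (W_k, Z_k)_{k ∈ 𝒯 ∪ {u}})`. -/
def Secure (𝓢 : DSAScheme F K U L LX LY) (T : ℕ) : Prop :=
  letI : MeasurableSpace 𝓢.Ω := 𝓢.mΩ
  ∀ U1 : Finset (Fin K), U ≤ U1.card →
  ∀ 𝒯 : Finset (Fin K), 𝒯.card ≤ T →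
  ∀ u : Fin K,
    CondIndepRV 𝓢.P
      (fun ω => ((fun k : {k : Fin K // k ≠ u} => 𝓢.X k.1 ω),
                 (fun k : {k // k ∈ U1.erase u} => 𝓢.Y U1 k.1 ω)))
      (fun ω (k : Fin K) => 𝓢.W k ω)
      (fun ω => (∑ k ∈ U1, 𝓢.W k ω,
                 fun k : {k // k ∈ insert u 𝒯} => (𝓢.W k.1 ω, 𝓢.Z k.1 ω)))

end DSAScheme

/-! ### Auxiliary lemmas for the converse proof -/

section AuxMeasure

variable {Ω V : Type*} [MeasurableSpace Ω] [Fintype V]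
  (P : Measure Ω) (Ψ : Ω → V)

lemma aux_PP_eq_sum (hmeas : ∀ v : V, MeasurableSet (Ψ ⁻¹' {v}))
    (S : Set V) [DecidablePred (· ∈ S)] :
    P (Ψ ⁻¹' S) = ∑ v ∈ Finset.univ.filter (· ∈ S), P (Ψ ⁻¹' {v}) := by
  have hU : Ψ ⁻¹' S = ⋃ v ∈ Finset.univ.filter (· ∈ S), Ψ ⁻¹' {v} := by
    ext ω
    simp only [Set.mem_preimage, Set.mem_iUnion, Finset.mem_filter, Finset.mem_univ,
      true_and, Set.mem_singleton_iff]
    exact ⟨fun h => ⟨Ψ ω, h, rfl⟩, fun ⟨v, hv, he⟩ => he ▸ hv⟩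
  rw [hU, measure_biUnion_finset ?_ (fun v _ => hmeas v)]
  intro v _ w _ hvw
  exact Set.disjoint_left.mpr (fun ω h1 h2 => hvw ((Set.mem_singleton_iff.mp h1).symm.trans
    (Set.mem_singleton_iff.mp h2)))

omit [Fintype V] in
lemma aux_ne_zero_of {S : Set V} {v : V} (hv : v ∈ S) (h : P (Ψ ⁻¹' {v}) ≠ 0) :
    P (Ψ ⁻¹' S) ≠ 0 := by
  intro h0
  exact h (le_antisymm (le_trans (measure_mono (Set.preimage_mono
    (Set.singleton_subset_iff.mpr hv))) h0.le) (zero_le))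

lemma aux_exists_of_ne_zero {S : Set V} (h : P (Ψ ⁻¹' S) ≠ 0) :
    ∃ v ∈ S, P (Ψ ⁻¹' {v}) ≠ 0 := by
  classical
  by_contra hc
  push_neg at hc
  have hsub : Ψ ⁻¹' S ⊆ ⋃ v ∈ Finset.univ.filter (· ∈ S), Ψ ⁻¹' {v} := by
    intro ω hω
    simp only [Set.mem_iUnion, Finset.mem_filter, Finset.mem_univ, true_and]
    exact ⟨Ψ ω, hω, rfl⟩
  have := (measure_mono hsub).trans (measure_biUnion_finset_le (μ := P) _ _)
  rw [Finset.sum_eq_zero (fun v hv => hc v (Finset.mem_filter.mp hv).2)] at this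
  exact h (le_antisymm this (zero_le))

lemma aux_fiber_sum (hmeas : ∀ v : V, MeasurableSet (Ψ ⁻¹' {v}))
    {B : Type*} [Fintype B] (φ : V → B) (S : Set V) :
    ∑ b : B, P (Ψ ⁻¹' {v | v ∈ S ∧ φ v = b}) = P (Ψ ⁻¹' S) := by
  classical
  have h1 : ∀ b : B, P (Ψ ⁻¹' {v | v ∈ S ∧ φ v = b})
      = ∑ v ∈ Finset.univ.filter (· ∈ S), if φ v = b then P (Ψ ⁻¹' {v}) else 0 := by
    intro b
    rw [aux_PP_eq_sum P Ψ hmeas {v | v ∈ S ∧ φ v = b}]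
    rw [Finset.sum_filter, Finset.sum_filter]
    apply Finset.sum_congr rfl
    intro v _
    by_cases h1 : v ∈ S <;> by_cases h2 : φ v = b <;>
      simp [Set.mem_setOf_eq, h1, h2]
  rw [Finset.sum_congr rfl (fun b _ => h1 b), Finset.sum_comm]
  rw [aux_PP_eq_sum P Ψ hmeas S]
  apply Finset.sum_congr rfl
  intro v _
  simp

lemma aux_exists_fiber_ne_zero (hmeas : ∀ v : V, MeasurableSet (Ψ ⁻¹' {v}))
    {B : Type*} [Fintype B] (φ : V → B) {S : Set V} (h : P (Ψ ⁻¹' S) ≠ 0) :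
    ∃ b : B, P (Ψ ⁻¹' {v | v ∈ S ∧ φ v = b}) ≠ 0 := by
  rcases Finset.exists_ne_zero_of_sum_ne_zero
    (by rw [aux_fiber_sum P Ψ hmeas φ S]; exact h) with ⟨b, -, hb⟩
  exact ⟨b, hb⟩

/-- Marginalizing the second component out of a pointwise conditional
independence statement, when everything factors through a master map `Ψ`. -/
lemma condIndep_marg {A B C D : Type*} [Fintype B]
    (hmeas : ∀ v : V, MeasurableSet (Ψ ⁻¹' {v}))
    (α : V → A) (β : V → B) (γ : V → C) (δ : V → D)
    (H : CondIndepRV P (fun ω => (α (Ψ ω), β (Ψ ω))) (fun ω => γ (Ψ ω)) (fun ω => δ (Ψ ω)))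
    (a : A) (c : C) (d : D) :
    P (Ψ ⁻¹' {v | (α v = a ∧ γ v = c) ∧ δ v = d}) * P (Ψ ⁻¹' {v | δ v = d}) =
      P (Ψ ⁻¹' {v | α v = a ∧ δ v = d}) * P (Ψ ⁻¹' {v | γ v = c ∧ δ v = d}) := by
  classical
  have e2 : (fun ω => δ (Ψ ω)) ⁻¹' {d} = Ψ ⁻¹' {v | δ v = d} := rfl
  have e4 : (fun ω => γ (Ψ ω)) ⁻¹' {c} ∩ (fun ω => δ (Ψ ω)) ⁻¹' {d}
      = Ψ ⁻¹' {v | γ v = c ∧ δ v = d} := by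
    ext ω
    simp only [Set.mem_inter_iff, Set.mem_preimage, Set.mem_singleton_iff, Set.mem_setOf_eq]
  have e1 : ∀ b : B, (fun ω => (α (Ψ ω), β (Ψ ω))) ⁻¹' {(a, b)} ∩
        (fun ω => γ (Ψ ω)) ⁻¹' {c} ∩ (fun ω => δ (Ψ ω)) ⁻¹' {d}
      = Ψ ⁻¹' {v | v ∈ {v | (α v = a ∧ γ v = c) ∧ δ v = d} ∧ β v = b} := by
    intro b; ext ω
    simp only [Set.mem_inter_iff, Set.mem_preimage, Set.mem_singleton_iff,
      Prod.mk.injEq, Set.mem_setOf_eq]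
    tauto
  have e3 : ∀ b : B, (fun ω => (α (Ψ ω), β (Ψ ω))) ⁻¹' {(a, b)} ∩
        (fun ω => δ (Ψ ω)) ⁻¹' {d}
      = Ψ ⁻¹' {v | v ∈ {v | α v = a ∧ δ v = d} ∧ β v = b} := by
    intro b; ext ω
    simp only [Set.mem_inter_iff, Set.mem_preimage, Set.mem_singleton_iff,
      Prod.mk.injEq, Set.mem_setOf_eq]
    tauto
  calc P (Ψ ⁻¹' {v | (α v = a ∧ γ v = c) ∧ δ v = d}) * P (Ψ ⁻¹' {v | δ v = d})
      = (∑ b : B, P (Ψ ⁻¹' {v | v ∈ {v | (α v = a ∧ γ v = c) ∧ δ v = d} ∧ β v = b})) *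
          P (Ψ ⁻¹' {v | δ v = d}) := by
        rw [aux_fiber_sum P Ψ hmeas β]
    _ = ∑ b : B, P (Ψ ⁻¹' {v | v ∈ {v | (α v = a ∧ γ v = c) ∧ δ v = d} ∧ β v = b}) *
          P (Ψ ⁻¹' {v | δ v = d}) := Finset.sum_mul _ _ _
    _ = ∑ b : B, P (Ψ ⁻¹' {v | v ∈ {v | α v = a ∧ δ v = d} ∧ β v = b}) *
          P (Ψ ⁻¹' {v | γ v = c ∧ δ v = d}) := by
        refine Finset.sum_congr rfl fun b _ => ?_
        have HH := H (a, b) c d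
        rw [e1 b, e3 b, e4, e2] at HH
        exact HH
    _ = (∑ b : B, P (Ψ ⁻¹' {v | v ∈ {v | α v = a ∧ δ v = d} ∧ β v = b})) *
          P (Ψ ⁻¹' {v | γ v = c ∧ δ v = d}) := (Finset.sum_mul _ _ _).symm
    _ = P (Ψ ⁻¹' {v | α v = a ∧ δ v = d}) * P (Ψ ⁻¹' {v | γ v = c ∧ δ v = d}) := by
        rw [aux_fiber_sum P Ψ hmeas β]

end AuxMeasure

namespace DSAScheme

variable {F : Type} [Fintype F] {K U L LX LY : ℕ} (𝓢 : DSAScheme F K U L LX LY)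

/-- The master random tuple collecting all the randomness of the scheme. -/
def master : 𝓢.Ω → (Fin K → ((Fin L → F) × 𝓢.Zt)) := fun ω k => (𝓢.W k ω, 𝓢.Z k ω)

lemma master_fiber_meas (v : Fin K → ((Fin L → F) × 𝓢.Zt)) :
    MeasurableSet[𝓢.mΩ] (𝓢.master ⁻¹' {v}) := by
  letI := 𝓢.mΩ
  have h : 𝓢.master ⁻¹' {v} = ⋂ k, ((𝓢.W k ⁻¹' {(v k).1}) ∩ (𝓢.Z k ⁻¹' {(v k).2})) := by
    ext ω
    simp only [Set.mem_preimage, Set.mem_singleton_iff, Set.mem_iInter, Set.mem_inter_iff,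
      master, funext_iff, Prod.ext_iff]
  rw [h]
  exact MeasurableSet.iInter fun k => (𝓢.measW k _).inter (𝓢.measZ k _)

/-- The probability of a master fiber only depends on the key components. -/
lemma master_fiber_eq (v v' : Fin K → ((Fin L → F) × 𝓢.Zt))
    (h : ∀ k, (v k).2 = (v' k).2) :
    𝓢.P (𝓢.master ⁻¹' {v}) = 𝓢.P (𝓢.master ⁻¹' {v'}) := by
  have split : ∀ w : Fin K → ((Fin L → F) × 𝓢.Zt),
      𝓢.master ⁻¹' {w} =
        ((fun ω (k : Fin K) => 𝓢.W k ω) ⁻¹' {fun k => (w k).1}) ∩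
        ((fun ω (k : Fin K) => 𝓢.Z k ω) ⁻¹' {fun k => (w k).2}) := by
    intro w; ext ω
    simp only [Set.mem_preimage, Set.mem_singleton_iff, Set.mem_inter_iff, funext_iff,
      master, Prod.ext_iff]
    exact ⟨fun hh => ⟨fun k => (hh k).1, fun k => (hh k).2⟩, fun hh k => ⟨hh.1 k, hh.2 k⟩⟩
  have hW : ∀ a : Fin K → (Fin L → F),
      𝓢.P ((fun ω (k : Fin K) => 𝓢.W k ω) ⁻¹' {a}) =
        ((Fintype.card (Fin L → F) : ℝ≥0∞))⁻¹ ^ K := by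
    intro a
    have h2 : ((fun ω (k : Fin K) => 𝓢.W k ω) ⁻¹' {a}) = ⋂ k, 𝓢.W k ⁻¹' {a k} := by
      ext ω; simp [funext_iff]
    rw [h2, 𝓢.indepW a]
    rw [Finset.prod_congr rfl (fun k _ => 𝓢.unifW k (a k))]
    simp [Finset.prod_const]
  have hz : (fun k => (v k).2) = fun k => (v' k).2 := funext h
  rw [split, split, 𝓢.indepWZ, 𝓢.indepWZ, hW, hW, hz]

end DSAScheme

/-- Cancellation of a nonzero finite factor in `ℝ≥0∞`. -/
lemma ennreal_mul_cancel_right {x y z : ℝ≥0∞} (hz0 : z ≠ 0) (hzt : z ≠ ⊤)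
    (h : x * z = y * z) : x = y := by
  have h' := congrArg (· * z⁻¹) h
  simpa [mul_assoc, ENNReal.mul_inv_cancel hz0 hzt] using h'

/-- Fixing the value of a sum over a finite set by updating one coordinate. -/
lemma sum_update_fix {ι M : Type*} [DecidableEq ι] [AddCommGroup M]
    (s : Finset ι) (f : ι → M) {i : ι} (hi : i ∈ s) (t : M) :
    ∑ x ∈ s, Function.update f i (f i + (t - ∑ x ∈ s, f x)) x = t := by
  rw [Finset.sum_update_of_mem hi, Finset.sdiff_singleton_eq_erase,
    Finset.sum_erase_eq_sub hi]
  abel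

/-- **Second-round converse for decentralized secure aggregation.**
For a finite field `F` with `q` elements, `K ≥ 3`, `T + 1 < U ≤ K - 1`, every two-round
DSA scheme satisfying the correctness constraint and the security constraint with
collusion parameter `T` has `(U - T - 1) · L_Y ≥ L`; consequently the second-round
rate satisfies `R₂ = L_Y / L ≥ 1 / (U - T - 1)` whenever `L ≥ 1`. -/
theorem dsa_second_round_converse
    (F : Type) [Field F] [Fintype F] (q K U T L LX LY : ℕ)
    (hq : Fintype.card F = q)
    (hK : 3 ≤ K) (hTU : T + 1 < U) (hUK : U ≤ K - 1)
    (𝓢 : DSAScheme F K U L LX LY)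
    (hcorrect : 𝓢.Correct) (hsecure : 𝓢.Secure T) :
    L ≤ (U - T - 1) * LY ∧
      (1 ≤ L → (1 : ℝ) / ((U - T - 1 : ℕ) : ℝ) ≤ (LY : ℝ) / (L : ℝ)) := by
  classical
  letI := 𝓢.mΩ
  haveI : IsProbabilityMeasure 𝓢.P := 𝓢.probP
  haveI : Fintype 𝓢.Zt := 𝓢.fZt
  have hq2 : 1 < q := hq ▸ Fintype.one_lt_card
  have hmain : L ≤ (U - T - 1) * LY := by
    -- choice of the surviving set, the user `u`, the colluding set and spare users
    have hUK' : U ≤ K := le_trans hUK (Nat.sub_le K 1)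
    obtain ⟨U1, -, hU1card⟩ := Finset.exists_subset_card_eq (s := (Finset.univ : Finset (Fin K))) (n := U)
      (by simpa using hUK')
    obtain ⟨u, hu⟩ := Finset.card_pos.mp (show 0 < U1.card by rw [hU1card]; omega)
    obtain ⟨𝒯, h𝒯sub, h𝒯card⟩ := Finset.exists_subset_card_eq (s := U1.erase u) (n := T)
      (by rw [Finset.card_erase_of_mem hu, hU1card]; omega)
    have hu𝒯 : u ∉ 𝒯 := fun h => (Finset.mem_erase.mp (h𝒯sub h)).1 rfl
    have hT'card : (insert u 𝒯).card = T + 1 := by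
      rw [Finset.card_insert_of_notMem hu𝒯, h𝒯card]
    have hT'U1 : insert u 𝒯 ⊆ U1 :=
      Finset.insert_subset hu (h𝒯sub.trans (Finset.erase_subset _ _))
    obtain ⟨j, hjU1, hjT'⟩ := Finset.not_subset.mp (show ¬ U1 ⊆ insert u 𝒯 from fun hsub => by
      have h := Finset.card_le_card hsub; rw [hU1card, hT'card] at h; omega)
    obtain ⟨u', hu'U1⟩ : ∃ u', u' ∉ U1 := by
      by_contra hcon; push_neg at hcon
      have h1 : (Finset.univ : Finset (Fin K)) ⊆ U1 := fun x _ => hcon x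
      have h2 := Finset.card_le_card h1
      rw [hU1card, Finset.card_univ, Fintype.card_fin] at h2
      omega
    have hju' : j ≠ u' := fun h => hu'U1 (h ▸ hjU1)
    have hu'T' : u' ∉ insert u 𝒯 := fun h => hu'U1 (hT'U1 h)
    have hU1'card : (insert u' (U1.erase j)).card = U := by
      rw [Finset.card_insert_of_notMem (fun h => hu'U1 (Finset.erase_subset _ _ h)),
        Finset.card_erase_of_mem hjU1, hU1card]
      omega
    -- the master map and the relevant functions of it
    set Ψ := 𝓢.master with hΨ
    have hmeas := 𝓢.master_fiber_meas
    set α : (Fin K → ((Fin L → F) × 𝓢.Zt)) → ({k : Fin K // k ≠ u} → Fin LX → F) :=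
      fun v k => 𝓢.f k.1 (v k.1).1 (v k.1).2 with hα
    set β1 : (Fin K → ((Fin L → F) × 𝓢.Zt)) → ({k : Fin K // k ∈ U1.erase u} → Fin LY → F) :=
      fun v k => 𝓢.g k.1 U1 (v k.1).1 (v k.1).2 with hβ1
    set β2 : (Fin K → ((Fin L → F) × 𝓢.Zt)) →
        ({k : Fin K // k ∈ (insert u' (U1.erase j)).erase u} → Fin LY → F) :=
      fun v k => 𝓢.g k.1 (insert u' (U1.erase j)) (v k.1).1 (v k.1).2 with hβ2
    set γ : (Fin K → ((Fin L → F) × 𝓢.Zt)) → (Fin K → Fin L → F) :=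
      fun v k => (v k).1 with hγ
    set κ : (Fin K → ((Fin L → F) × 𝓢.Zt)) →
        ({k : Fin K // k ∈ insert u 𝒯} → (Fin L → F) × 𝓢.Zt) :=
      fun v k => v k.1 with hκdef
    set δ1 : (Fin K → ((Fin L → F) × 𝓢.Zt)) →
        ((Fin L → F) × ({k : Fin K // k ∈ insert u 𝒯} → (Fin L → F) × 𝓢.Zt)) :=
      fun v => (∑ k ∈ U1, (v k).1, κ v) with hδ1
    set δ2 : (Fin K → ((Fin L → F) × 𝓢.Zt)) →
        ((Fin L → F) × ({k : Fin K // k ∈ insert u 𝒯} → (Fin L → F) × 𝓢.Zt)) :=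
      fun v => (∑ k ∈ insert u' (U1.erase j), (v k).1, κ v) with hδ2
    -- the two marginalized security statements
    have sec1 : ∀ a cγ d, 𝓢.P (Ψ ⁻¹' {v | (α v = a ∧ γ v = cγ) ∧ δ1 v = d}) *
          𝓢.P (Ψ ⁻¹' {v | δ1 v = d}) =
        𝓢.P (Ψ ⁻¹' {v | α v = a ∧ δ1 v = d}) * 𝓢.P (Ψ ⁻¹' {v | γ v = cγ ∧ δ1 v = d}) := by
      intro a cγ d
      refine condIndep_marg 𝓢.P Ψ hmeas α β1 γ δ1 ?_ a cγ d
      exact hsecure U1 (le_of_eq hU1card.symm) 𝒯 (le_of_eq h𝒯card) u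
    have sec2 : ∀ a cγ d, 𝓢.P (Ψ ⁻¹' {v | (α v = a ∧ γ v = cγ) ∧ δ2 v = d}) *
          𝓢.P (Ψ ⁻¹' {v | δ2 v = d}) =
        𝓢.P (Ψ ⁻¹' {v | α v = a ∧ δ2 v = d}) * 𝓢.P (Ψ ⁻¹' {v | γ v = cγ ∧ δ2 v = d}) := by
      intro a cγ d
      refine condIndep_marg 𝓢.P Ψ hmeas α β2 γ δ2 ?_ a cγ d
      exact hsecure (insert u' (U1.erase j)) (le_of_eq hU1'card.symm) 𝒯 (le_of_eq h𝒯card) u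
    -- a master value of positive probability
    obtain ⟨v0, -, hv0⟩ := aux_exists_of_ne_zero 𝓢.P Ψ (S := Set.univ)
      (by rw [Set.preimage_univ]; simp)
    set c := κ v0 with hcdef
    -- adjusted joint input assignments
    have hadj : ∀ s t : Fin L → F, ∃ w : Fin K → Fin L → F,
        (∑ k ∈ U1, w k) = s ∧ (∑ k ∈ insert u' (U1.erase j), w k) = t ∧
        ∀ k, k ≠ j → k ≠ u' → w k = (v0 k).1 := by
      intro s t
      set f0 : Fin K → Fin L → F := fun k => (v0 k).1 with hf0
      set f1 := Function.update f0 j (f0 j + (s - ∑ k ∈ U1, f0 k)) with hf1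
      have hs1 : ∑ k ∈ U1, f1 k = s := sum_update_fix U1 f0 hjU1 s
      have hju1' : j ∉ insert u' (U1.erase j) := by
        simp [Finset.mem_insert, hju', Finset.mem_erase]
      set f2 := Function.update f1 u' (f1 u' + (t - ∑ k ∈ insert u' (U1.erase j), f1 k)) with hf2
      refine ⟨f2, ?_, ?_, ?_⟩
      · have hu'U1mem : u' ∉ U1 := hu'U1
        rw [hf2, Finset.sum_update_of_notMem hu'U1mem, hs1]
      · exact sum_update_fix _ f1 (Finset.mem_insert_self _ _) t
      · intro k hkj hku'
        rw [hf2, Function.update_of_ne hku', hf1, Function.update_of_ne hkj]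
    choose wfn hw1 hw2 hw3 using hadj
    -- membership facts for the adjusted assignments
    have hvpos : ∀ s t : Fin L → F,
        𝓢.P (Ψ ⁻¹' {(fun k => (wfn s t k, (v0 k).2))}) ≠ 0 := by
      intro s t
      rw [𝓢.master_fiber_eq (fun k => (wfn s t k, (v0 k).2)) v0 (fun k => rfl)]
      exact hv0
    have hκv : ∀ s t : Fin L → F, κ (fun k => (wfn s t k, (v0 k).2)) = c := by
      intro s t
      funext k
      have hkj : k.1 ≠ j := fun h => hjT' (h ▸ k.2)
      have hku' : k.1 ≠ u' := fun h => hu'T' (h ▸ k.2)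
      show (wfn s t k.1, (v0 k.1).2) = v0 k.1
      rw [hw3 s t k.1 hkj hku']
    have hδ1v : ∀ s t : Fin L → F, δ1 (fun k => (wfn s t k, (v0 k).2)) = (s, c) := by
      intro s t
      rw [hδ1]
      exact Prod.ext (by simpa using hw1 s t) (hκv s t)
    have hδ2v : ∀ s t : Fin L → F, δ2 (fun k => (wfn s t k, (v0 k).2)) = (t, c) := by
      intro s t
      rw [hδ2]
      exact Prod.ext (by simpa using hw2 s t) (hκv s t)
    -- positivity of the conditioning events
    have hQ1 : ∀ s : Fin L → F, 𝓢.P (Ψ ⁻¹' {v | δ1 v = (s, c)}) ≠ 0 := fun s =>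
      aux_ne_zero_of 𝓢.P Ψ (hδ1v s 0) (hvpos s 0)
    have hQ2 : ∀ t : Fin L → F, 𝓢.P (Ψ ⁻¹' {v | δ2 v = (t, c)}) ≠ 0 := fun t =>
      aux_ne_zero_of 𝓢.P Ψ (hδ2v 0 t) (hvpos 0 t)
    have hN : ∀ s t : Fin L → F,
        𝓢.P (Ψ ⁻¹' {v | γ v = wfn s t ∧ δ2 v = (t, c)}) ≠ 0 := by
      intro s t
      exact aux_ne_zero_of 𝓢.P Ψ ⟨rfl, hδ2v s t⟩ (hvpos s t)
    -- the transfer identity between the two conditioning events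
    have step1 : ∀ (a : {k : Fin K // k ≠ u} → Fin LX → F) (s t : Fin L → F),
        𝓢.P (Ψ ⁻¹' {v | α v = a ∧ δ1 v = (s, c)}) * 𝓢.P (Ψ ⁻¹' {v | δ2 v = (t, c)}) =
        𝓢.P (Ψ ⁻¹' {v | α v = a ∧ δ2 v = (t, c)}) * 𝓢.P (Ψ ⁻¹' {v | δ1 v = (s, c)}) := by
      intro a s t
      have hd12 : ∀ v : Fin K → ((Fin L → F) × 𝓢.Zt), γ v = wfn s t →
          (δ1 v = (s, c) ↔ δ2 v = (t, c)) := by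
        intro v hG
        have hG' : ∀ k, (v k).1 = wfn s t k := fun k => congrFun hG k
        have h1 : ∑ k ∈ U1, (v k).1 = s :=
          (Finset.sum_congr rfl fun k _ => hG' k).trans (hw1 s t)
        have h2 : ∑ k ∈ insert u' (U1.erase j), (v k).1 = t :=
          (Finset.sum_congr rfl fun k _ => hG' k).trans (hw2 s t)
        rw [hδ1, hδ2]
        simp [Prod.ext_iff, h1, h2]
      have E1 : {v | (α v = a ∧ γ v = wfn s t) ∧ δ1 v = (s, c)} =
          {v | (α v = a ∧ γ v = wfn s t) ∧ δ2 v = (t, c)} :=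
        Set.ext fun v => and_congr_right fun hv => hd12 v hv.2
      have E3 : {v | γ v = wfn s t ∧ δ1 v = (s, c)} =
          {v | γ v = wfn s t ∧ δ2 v = (t, c)} :=
        Set.ext fun v => and_congr_right fun hv => hd12 v hv
      have h1 := sec1 a (wfn s t) (s, c)
      have h2 := sec2 a (wfn s t) (t, c)
      rw [E1, E3] at h1
      -- h1 : M * Q1 = ρ1 * N,  h2 : M * Q2 = ρ2 * N
      have hcalc : (𝓢.P (Ψ ⁻¹' {v | α v = a ∧ δ1 v = (s, c)}) *
            𝓢.P (Ψ ⁻¹' {v | δ2 v = (t, c)})) *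
            𝓢.P (Ψ ⁻¹' {v | γ v = wfn s t ∧ δ2 v = (t, c)}) =
          (𝓢.P (Ψ ⁻¹' {v | α v = a ∧ δ2 v = (t, c)}) *
            𝓢.P (Ψ ⁻¹' {v | δ1 v = (s, c)})) *
            𝓢.P (Ψ ⁻¹' {v | γ v = wfn s t ∧ δ2 v = (t, c)}) := by
        calc (𝓢.P (Ψ ⁻¹' {v | α v = a ∧ δ1 v = (s, c)}) *
              𝓢.P (Ψ ⁻¹' {v | δ2 v = (t, c)})) *
              𝓢.P (Ψ ⁻¹' {v | γ v = wfn s t ∧ δ2 v = (t, c)})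
            = (𝓢.P (Ψ ⁻¹' {v | α v = a ∧ δ1 v = (s, c)}) *
              𝓢.P (Ψ ⁻¹' {v | γ v = wfn s t ∧ δ2 v = (t, c)})) *
              𝓢.P (Ψ ⁻¹' {v | δ2 v = (t, c)}) := by ring
          _ = (𝓢.P (Ψ ⁻¹' {v | (α v = a ∧ γ v = wfn s t) ∧ δ2 v = (t, c)}) *
              𝓢.P (Ψ ⁻¹' {v | δ1 v = (s, c)})) *
              𝓢.P (Ψ ⁻¹' {v | δ2 v = (t, c)}) := by rw [← h1]
          _ = (𝓢.P (Ψ ⁻¹' {v | (α v = a ∧ γ v = wfn s t) ∧ δ2 v = (t, c)}) *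
              𝓢.P (Ψ ⁻¹' {v | δ2 v = (t, c)})) *
              𝓢.P (Ψ ⁻¹' {v | δ1 v = (s, c)}) := by ring
          _ = (𝓢.P (Ψ ⁻¹' {v | α v = a ∧ δ2 v = (t, c)}) *
              𝓢.P (Ψ ⁻¹' {v | γ v = wfn s t ∧ δ2 v = (t, c)})) *
              𝓢.P (Ψ ⁻¹' {v | δ1 v = (s, c)}) := by rw [h2]
          _ = (𝓢.P (Ψ ⁻¹' {v | α v = a ∧ δ2 v = (t, c)}) *
              𝓢.P (Ψ ⁻¹' {v | δ1 v = (s, c)})) *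
              𝓢.P (Ψ ⁻¹' {v | γ v = wfn s t ∧ δ2 v = (t, c)}) := by ring
      exact ennreal_mul_cancel_right (hN s t) (measure_ne_top _ _) hcalc
    -- the main exchange identity for the actual conditioning event
    have step2 : ∀ (a : {k : Fin K // k ≠ u} → Fin LX → F) (s s' : Fin L → F),
        𝓢.P (Ψ ⁻¹' {v | α v = a ∧ δ1 v = (s, c)}) * 𝓢.P (Ψ ⁻¹' {v | δ1 v = (s', c)}) =
        𝓢.P (Ψ ⁻¹' {v | α v = a ∧ δ1 v = (s', c)}) * 𝓢.P (Ψ ⁻¹' {v | δ1 v = (s, c)}) := by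
      intro a s s'
      have h1 := step1 a s 0
      have h2 := step1 a s' 0
      have hcalc : (𝓢.P (Ψ ⁻¹' {v | α v = a ∧ δ1 v = (s, c)}) *
            𝓢.P (Ψ ⁻¹' {v | δ1 v = (s', c)})) * 𝓢.P (Ψ ⁻¹' {v | δ2 v = (0, c)}) =
          (𝓢.P (Ψ ⁻¹' {v | α v = a ∧ δ1 v = (s', c)}) *
            𝓢.P (Ψ ⁻¹' {v | δ1 v = (s, c)})) * 𝓢.P (Ψ ⁻¹' {v | δ2 v = (0, c)}) := by
        calc (𝓢.P (Ψ ⁻¹' {v | α v = a ∧ δ1 v = (s, c)}) *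
              𝓢.P (Ψ ⁻¹' {v | δ1 v = (s', c)})) * 𝓢.P (Ψ ⁻¹' {v | δ2 v = (0, c)})
            = (𝓢.P (Ψ ⁻¹' {v | α v = a ∧ δ1 v = (s, c)}) *
              𝓢.P (Ψ ⁻¹' {v | δ2 v = (0, c)})) * 𝓢.P (Ψ ⁻¹' {v | δ1 v = (s', c)}) := by
              ring
          _ = (𝓢.P (Ψ ⁻¹' {v | α v = a ∧ δ2 v = (0, c)}) *
              𝓢.P (Ψ ⁻¹' {v | δ1 v = (s, c)})) * 𝓢.P (Ψ ⁻¹' {v | δ1 v = (s', c)}) := by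
              rw [h1]
          _ = (𝓢.P (Ψ ⁻¹' {v | α v = a ∧ δ2 v = (0, c)}) *
              𝓢.P (Ψ ⁻¹' {v | δ1 v = (s', c)})) * 𝓢.P (Ψ ⁻¹' {v | δ1 v = (s, c)}) := by
              ring
          _ = (𝓢.P (Ψ ⁻¹' {v | α v = a ∧ δ1 v = (s', c)}) *
              𝓢.P (Ψ ⁻¹' {v | δ2 v = (0, c)})) * 𝓢.P (Ψ ⁻¹' {v | δ1 v = (s, c)}) := by
              rw [← h2]
          _ = (𝓢.P (Ψ ⁻¹' {v | α v = a ∧ δ1 v = (s', c)}) *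
              𝓢.P (Ψ ⁻¹' {v | δ1 v = (s, c)})) * 𝓢.P (Ψ ⁻¹' {v | δ2 v = (0, c)}) := by
              ring
      exact ennreal_mul_cancel_right (hQ2 0) (measure_ne_top _ _) hcalc
    -- choose a first-round message tuple of positive probability at sum `0`
    obtain ⟨astar, hastar⟩ := aux_exists_fiber_ne_zero 𝓢.P Ψ hmeas α
      (S := {v | δ1 v = ((0 : Fin L → F), c)}) (hQ1 0)
    have hastar' : 𝓢.P (Ψ ⁻¹' {v | α v = astar ∧ δ1 v = ((0 : Fin L → F), c)}) ≠ 0 := by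
      have hset : {v | v ∈ {v | δ1 v = ((0 : Fin L → F), c)} ∧ α v = astar} =
          {v | α v = astar ∧ δ1 v = ((0 : Fin L → F), c)} := by
        ext v; exact and_comm
      rwa [hset] at hastar
    have hρ : ∀ s : Fin L → F,
        𝓢.P (Ψ ⁻¹' {v | α v = astar ∧ δ1 v = (s, c)}) ≠ 0 := by
      intro s h0
      have h := step2 astar 0 s
      rw [h0, zero_mul] at h
      exact (mul_ne_zero hastar' (hQ1 s)) h
    -- choose second-round messages of positive probability for each sum value
    obtain ⟨d, hd⟩ := hcorrect U1 U1 (Finset.Subset.refl U1) (le_of_eq hU1card.symm) u hu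
    have key : ∀ s : Fin L → F, ∃ b : ({k : Fin K // k ∈ U1.erase u} → Fin LY → F),
        (∀ (k : {k : Fin K // k ∈ U1.erase u}) (hk : k.1 ∈ 𝒯),
          b k = 𝓢.g k.1 U1 (c ⟨k.1, Finset.mem_insert_of_mem hk⟩).1
            (c ⟨k.1, Finset.mem_insert_of_mem hk⟩).2) ∧
        d (fun k => astar ⟨k.1, Finset.ne_of_mem_erase k.2⟩) b
          (c ⟨u, Finset.mem_insert_self u 𝒯⟩).1 (c ⟨u, Finset.mem_insert_self u 𝒯⟩).2 = s := by
      intro s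
      obtain ⟨b, hbpos⟩ := aux_exists_fiber_ne_zero 𝓢.P Ψ hmeas β1
        (S := {v | α v = astar ∧ δ1 v = (s, c)}) (hρ s)
      refine ⟨b, ?_⟩
      -- find an actual sample point
      set G : Set 𝓢.Ω := {ω | d (fun k => 𝓢.X k.1 ω) (fun k => 𝓢.Y U1 k.1 ω)
          (𝓢.W u ω) (𝓢.Z u ω) = ∑ k ∈ U1, 𝓢.W k ω} with hG
      have hGc : 𝓢.P Gᶜ = 0 := by
        have := MeasureTheory.ae_iff.mp hd
        exact this
      set E : Set 𝓢.Ω := Ψ ⁻¹' {v | v ∈ {v | α v = astar ∧ δ1 v = (s, c)} ∧ β1 v = b}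
        with hE
      have hEG : 𝓢.P (E ∩ G) ≠ 0 := by
        intro h0
        have h1 : 𝓢.P E ≤ 𝓢.P (E ∩ G) + 𝓢.P (E \ G) := measure_le_inter_add_diff _ _ _
        have h2 : 𝓢.P (E \ G) = 0 :=
          le_antisymm ((measure_mono fun ω hω => hω.2).trans hGc.le) (zero_le)
        rw [h0, h2, add_zero] at h1
        exact hbpos (le_antisymm h1 (zero_le))
      have hne : (E ∩ G).Nonempty := by
        by_contra hcon
        rw [Set.not_nonempty_iff_eq_empty] at hcon
        exact hEG (by rw [hcon]; exact measure_empty)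
      obtain ⟨ω, hωE, hωG⟩ := hne
      obtain ⟨⟨hA, hD⟩, hB⟩ := hωE
      have hsum : ∑ k ∈ U1, (Ψ ω k).1 = s := by
        have := congrArg Prod.fst hD
        simpa [hδ1] using this
      have hκc : κ (Ψ ω) = c := by
        have := congrArg Prod.snd hD
        simpa [hδ1] using this
      constructor
      · intro k hk
        have hmem : Ψ ω k.1 = c ⟨k.1, Finset.mem_insert_of_mem hk⟩ :=
          congrFun hκc ⟨k.1, Finset.mem_insert_of_mem hk⟩
        have : b k = 𝓢.g k.1 U1 (Ψ ω k.1).1 (Ψ ω k.1).2 := (congrFun hB k).symm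
        rw [this, hmem]
      · have hu' : Ψ ω u = c ⟨u, Finset.mem_insert_self u 𝒯⟩ :=
          congrFun hκc ⟨u, Finset.mem_insert_self u 𝒯⟩
        have hX : (fun k : {k : Fin K // k ∈ U1.erase u} => 𝓢.X k.1 ω) =
            (fun k => astar ⟨k.1, Finset.ne_of_mem_erase k.2⟩) := by
          funext k
          exact congrFun hA ⟨k.1, Finset.ne_of_mem_erase k.2⟩
        have hY : (fun k : {k : Fin K // k ∈ U1.erase u} => 𝓢.Y U1 k.1 ω) = b := by
          funext k
          exact congrFun hB k
        have hWu : 𝓢.W u ω = (c ⟨u, Finset.mem_insert_self u 𝒯⟩).1 :=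
          congrArg Prod.fst hu'
        have hZu : 𝓢.Z u ω = (c ⟨u, Finset.mem_insert_self u 𝒯⟩).2 :=
          congrArg Prod.snd hu'
        calc d (fun k => astar ⟨k.1, Finset.ne_of_mem_erase k.2⟩) b
              (c ⟨u, Finset.mem_insert_self u 𝒯⟩).1 (c ⟨u, Finset.mem_insert_self u 𝒯⟩).2
            = d (fun k => 𝓢.X k.1 ω) (fun k => 𝓢.Y U1 k.1 ω) (𝓢.W u ω) (𝓢.Z u ω) := by
              rw [hX, hY, hWu, hZu]
          _ = ∑ k ∈ U1, 𝓢.W k ω := hωG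
          _ = s := hsum
    choose bb hbfix hbd using key
    -- the injection forced by the decoder
    set Sd := (U1.erase u) \ 𝒯 with hSd
    have hΦinj : Function.Injective
        (fun (s : Fin L → F) (k : {k : Fin K // k ∈ Sd}) =>
          bb s ⟨k.1, (Finset.mem_sdiff.mp k.2).1⟩) := by
      intro s s' h
      have hbeq : bb s = bb s' := by
        funext k
        by_cases hk : k.1 ∈ 𝒯
        · rw [hbfix s k hk, hbfix s' k hk]
        · have hmem : k.1 ∈ Sd := Finset.mem_sdiff.mpr ⟨k.2, hk⟩
          have := congrFun h ⟨k.1, hmem⟩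
          simpa using this
      calc s = d (fun k => astar ⟨k.1, Finset.ne_of_mem_erase k.2⟩) (bb s)
            (c ⟨u, Finset.mem_insert_self u 𝒯⟩).1 (c ⟨u, Finset.mem_insert_self u 𝒯⟩).2 :=
            (hbd s).symm
        _ = d (fun k => astar ⟨k.1, Finset.ne_of_mem_erase k.2⟩) (bb s')
            (c ⟨u, Finset.mem_insert_self u 𝒯⟩).1 (c ⟨u, Finset.mem_insert_self u 𝒯⟩).2 := by
            rw [hbeq]
        _ = s' := hbd s'
    have hSdcard : Sd.card = U - T - 1 := by
      rw [hSd, Finset.card_sdiff_of_subset h𝒯sub, Finset.card_erase_of_mem hu, hU1card, h𝒯card]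
      omega
    have hcard := Fintype.card_le_of_injective _ hΦinj
    rw [Fintype.card_fun, Fintype.card_fun, Fintype.card_fun, Fintype.card_coe,
      Fintype.card_fin, Fintype.card_fin, hq, hSdcard, ← pow_mul] at hcard
    have := (Nat.pow_le_pow_iff_right hq2).mp hcard
    calc L ≤ LY * (U - T - 1) := this
      _ = (U - T - 1) * LY := Nat.mul_comm _ _
  refine ⟨hmain, fun hL => ?_⟩
  have hpos1 : (0 : ℝ) < ((U - T - 1 : ℕ) : ℝ) := by
    have : 1 ≤ U - T - 1 := by omega
    exact_mod_cast Nat.lt_of_lt_of_le Nat.zero_lt_one this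
  have hposL : (0 : ℝ) < (L : ℝ) := by exact_mod_cast hL
  rw [div_le_div_iff₀ hpos1 hposL, one_mul]
  have hcast : (L : ℝ) ≤ ((U - T - 1 : ℕ) : ℝ) * (LY : ℝ) := by
    exact_mod_cast hmain
  rw [mul_comm]
  exact hcast
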